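/- Let r: [0,∞) → ℝ be a measurable function with |r(s)| ≤ c for all s, let ψ be the cutoff from the second-variation argument (ψ = s on [0,1], 1 on [1,s₀−1], s₀−s on [s₀−1,s₀]), and suppose ∫₀^{s₀} ψ² r ds ≤ (n−1)∫₀^{s₀}|ψ'|² ds for all s₀ > 2. Then ∫₀^{s₀} r(s) ds ≤ 2(n−1) + 2c for all s₀ > 2. -/

import Mathlib

open MeasureTheory Set intervalIntegral

/-- A function equal to a constant on the open interval is interval integrable and its
integral is `v * (b - a)`. -/
lemma sv_aux_const_on_Ioo (a b v : ℝ) (hab : a ≤ b) (g : ℝ → ℝ)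
    (hg : ∀ x ∈ Set.Ioo a b, g x = v) :
    IntervalIntegrable g volume a b ∧ (∫ x in a..b, g x) = v * (b - a) := by
  have hae : ∀ᵐ x ∂(volume : Measure ℝ), x ∈ Set.Ioc a b → g x = v := by
    have hsub : {x : ℝ | ¬ (x ∈ Set.Ioc a b → g x = v)} ⊆ {b} := by
      intro x hx
      simp only [Set.mem_setOf_eq, Classical.not_imp] at hx
      rcases hx with ⟨hx1, hx2⟩
      by_contra hxb
      exact hx2 (hg x ⟨hx1.1, lt_of_le_of_ne hx1.2 hxb⟩)
    rw [MeasureTheory.ae_iff]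
    exact measure_mono_null hsub (measure_singleton b)
  have haer : g =ᵐ[volume.restrict (Set.Ioc a b)] fun _ => v :=
    (ae_restrict_iff' measurableSet_Ioc).2 hae
  have hint : IntervalIntegrable g volume a b := by
    rw [intervalIntegrable_iff, Set.uIoc_of_le hab]
    exact (MeasureTheory.integrableOn_const measure_Ioc_lt_top.ne).congr haer.symm
  constructor
  · exact hint
  · have : (∫ x in a..b, g x) = ∫ x in a..b, (v : ℝ) := by
      apply intervalIntegral.integral_congr_ae
      rw [Set.uIoc_of_le hab]
      exact hae
    rw [this, intervalIntegral.integral_const, smul_eq_mul, mul_comm]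

/-- A measurable function bounded on `uIcc a b` is interval integrable. -/
lemma sv_aux_intervalIntegrable (a b C : ℝ) (f : ℝ → ℝ) (hf : Measurable f)
    (h : ∀ x ∈ Set.uIcc a b, |f x| ≤ C) :
    IntervalIntegrable f volume a b := by
  rw [intervalIntegrable_iff]
  refine MeasureTheory.Integrable.mono' (g := fun _ => C)
    (MeasureTheory.integrableOn_const measure_Ioc_lt_top.ne)
    hf.aestronglyMeasurable.restrict ?_
  refine (ae_restrict_iff' measurableSet_uIoc).2 (Filter.Eventually.of_forall ?_)
  intro x hx
  exact h x (Set.uIoc_subset_uIcc hx)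

/-- If |r| ≤ c and the second-variation inequality
∫₀^{s₀} ψ² r ≤ (n−1) ∫₀^{s₀} |ψ'|² holds for the standard cutoff
ψ(s) = min(s, min(1, s₀−s)) for all s₀ > 2, then
∫₀^{s₀} r ≤ 2(n−1) + 2c for all s₀ > 2. -/
theorem second_variation_integral_bound
    (n : ℕ) (hn : 2 ≤ n) (c : ℝ) (hc : 0 ≤ c)
    (r : ℝ → ℝ) (hmeas : Measurable r) (hbd : ∀ s, |r s| ≤ c)
    (hsv : ∀ s₀ > (2:ℝ),
      (∫ s in (0:ℝ)..s₀, (min s (min 1 (s₀ - s)))^2 * r s) ≤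
        (n - 1) * ∫ s in (0:ℝ)..s₀,
          |deriv (fun t => min t (min 1 (s₀ - t))) s| ^ 2) :
    ∀ s₀ > (2:ℝ), (∫ s in (0:ℝ)..s₀, r s) ≤ 2 * (n - 1) + 2 * c := by
  intro s₀ hs₀
  set ψ : ℝ → ℝ := fun t => min t (min 1 (s₀ - t)) with hψ
  have h01 : (0:ℝ) ≤ 1 := zero_le_one
  have h1s : (1:ℝ) ≤ s₀ - 1 := by linarith
  have hss : s₀ - 1 ≤ s₀ := by linarith
  have h0s : (0:ℝ) ≤ s₀ := by linarith
  -- ψ is continuous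
  have hψcont : Continuous ψ := by
    apply Continuous.min continuous_id
    exact Continuous.min continuous_const (continuous_const.sub continuous_id)
  have hψmeas : Measurable ψ := hψcont.measurable
  -- ψ values on pieces
  have hψ_left : ∀ t ∈ Set.Iio (1:ℝ), ψ t = t := by
    intro t ht
    simp only [Set.mem_Iio] at ht
    exact min_eq_left (le_min ht.le (by linarith))
  have hψ_mid : ∀ t ∈ Set.Icc (1:ℝ) (s₀ - 1), ψ t = 1 := by
    intro t ht
    have h1 : min 1 (s₀ - t) = 1 := min_eq_left (by linarith [ht.2])
    rw [hψ]; dsimp only; rw [h1]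
    exact min_eq_right ht.1
  have hψ_right : ∀ t ∈ Set.Ioi (s₀ - 1), ψ t = s₀ - t := by
    intro t ht
    simp only [Set.mem_Ioi] at ht
    have h1 : min 1 (s₀ - t) = s₀ - t := min_eq_right (by linarith)
    rw [hψ]; dsimp only; rw [h1]
    exact min_eq_right (by linarith)
  -- derivative on pieces
  have hd_left : ∀ t ∈ Set.Ioo (0:ℝ) 1, |deriv ψ t| ^ 2 = 1 := by
    intro t ht
    have hmem : Set.Iio (1:ℝ) ∈ nhds t := isOpen_Iio.mem_nhds ht.2
    have heq : ψ =ᶠ[nhds t] id := Filter.eventuallyEq_of_mem hmem hψ_left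
    rw [heq.deriv_eq, deriv_id]
    norm_num
  have hd_mid : ∀ t ∈ Set.Ioo (1:ℝ) (s₀ - 1), |deriv ψ t| ^ 2 = 0 := by
    intro t ht
    have hmem : Set.Ioo (1:ℝ) (s₀ - 1) ∈ nhds t := isOpen_Ioo.mem_nhds ht
    have heq : ψ =ᶠ[nhds t] (fun _ => (1:ℝ)) :=
      Filter.eventuallyEq_of_mem hmem fun x hx => hψ_mid x ⟨hx.1.le, hx.2.le⟩
    rw [heq.deriv_eq, deriv_const]
    norm_num
  have hd_right : ∀ t ∈ Set.Ioo (s₀ - 1) s₀, |deriv ψ t| ^ 2 = 1 := by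
    intro t ht
    have hmem : Set.Ioi (s₀ - 1) ∈ nhds t := isOpen_Ioi.mem_nhds ht.1
    have heq : ψ =ᶠ[nhds t] (fun x => s₀ - x) := Filter.eventuallyEq_of_mem hmem hψ_right
    rw [heq.deriv_eq]
    have : HasDerivAt (fun x : ℝ => s₀ - x) (-1) t := (hasDerivAt_id t).const_sub s₀
    rw [this.deriv]
    norm_num
  -- compute the ψ' integral
  have hD1 := sv_aux_const_on_Ioo 0 1 1 h01 (fun s => |deriv ψ s| ^ 2) hd_left
  have hD2 := sv_aux_const_on_Ioo 1 (s₀ - 1) 0 h1s (fun s => |deriv ψ s| ^ 2) hd_mid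
  have hD3 := sv_aux_const_on_Ioo (s₀ - 1) s₀ 1 hss (fun s => |deriv ψ s| ^ 2) hd_right
  have hDint : (∫ s in (0:ℝ)..s₀, |deriv ψ s| ^ 2) = 2 := by
    rw [← intervalIntegral.integral_add_adjacent_intervals
        (b := (1:ℝ)) (hD1.1) ((hD2.1).trans hD3.1),
      ← intervalIntegral.integral_add_adjacent_intervals
        (b := (s₀ - 1)) (hD2.1) (hD3.1),
      hD1.2, hD2.2, hD3.2]
    ring
  -- second variation bound
  have hsv' : (∫ s in (0:ℝ)..s₀, ψ s ^ 2 * r s) ≤ 2 * ((n:ℝ) - 1) := by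
    have := hsv s₀ hs₀
    rw [hDint] at this
    calc (∫ s in (0:ℝ)..s₀, ψ s ^ 2 * r s) ≤ ((n:ℝ) - 1) * 2 := this
      _ = 2 * ((n:ℝ) - 1) := by ring
  -- bounds for ψ on [0, s₀]
  have hψ_bdd : ∀ x ∈ Set.Icc (0:ℝ) s₀, 0 ≤ ψ x ∧ ψ x ≤ 1 := by
    intro x hx
    constructor
    · exact le_min hx.1 (le_min zero_le_one (by linarith [hx.2]))
    · exact min_le_of_right_le (min_le_left _ _)
  -- integrability facts
  have hint_r : ∀ a b : ℝ, IntervalIntegrable r volume a b := fun a b =>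
    sv_aux_intervalIntegrable a b c r hmeas (fun x _ => hbd x)
  have hmeas_ψ2r : Measurable fun s => ψ s ^ 2 * r s := ((hψmeas.pow_const 2).mul hmeas)
  have hmeas_rest : Measurable fun s => (1 - ψ s ^ 2) * r s :=
    ((measurable_const.sub (hψmeas.pow_const 2)).mul hmeas)
  have hbd_rest : ∀ x ∈ Set.Icc (0:ℝ) s₀, |(1 - ψ x ^ 2) * r x| ≤ c := by
    intro x hx
    obtain ⟨h0, h1⟩ := hψ_bdd x hx
    rw [abs_mul]
    have h2 : |1 - ψ x ^ 2| ≤ 1 := by rw [abs_le]; constructor <;> nlinarith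
    calc |1 - ψ x ^ 2| * |r x| ≤ 1 * c :=
          mul_le_mul h2 (hbd x) (abs_nonneg _) zero_le_one
      _ = c := one_mul c
  have hbd_ψ2r : ∀ x ∈ Set.Icc (0:ℝ) s₀, |ψ x ^ 2 * r x| ≤ c := by
    intro x hx
    obtain ⟨h0, h1⟩ := hψ_bdd x hx
    rw [abs_mul]
    have h2 : |ψ x ^ 2| ≤ 1 := by rw [abs_le]; constructor <;> nlinarith
    calc |ψ x ^ 2| * |r x| ≤ 1 * c :=
          mul_le_mul h2 (hbd x) (abs_nonneg _) zero_le_one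
      _ = c := one_mul c
  have hsub1 : Set.uIcc (0:ℝ) s₀ ⊆ Set.Icc 0 s₀ := by
    rw [Set.uIcc_of_le h0s]
  have hint_ψ2r : IntervalIntegrable (fun s => ψ s ^ 2 * r s) volume 0 s₀ :=
    sv_aux_intervalIntegrable 0 s₀ c _ hmeas_ψ2r (fun x hx => hbd_ψ2r x (hsub1 hx))
  have hint_rest : ∀ a b : ℝ, Set.uIcc a b ⊆ Set.Icc 0 s₀ →
      IntervalIntegrable (fun s => (1 - ψ s ^ 2) * r s) volume a b := by
    intro a b hsub
    exact sv_aux_intervalIntegrable a b c _ hmeas_rest (fun x hx => hbd_rest x (hsub hx))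
  -- split ∫ r
  have hsplit : (∫ s in (0:ℝ)..s₀, r s) =
      (∫ s in (0:ℝ)..s₀, ψ s ^ 2 * r s) + ∫ s in (0:ℝ)..s₀, (1 - ψ s ^ 2) * r s := by
    rw [← intervalIntegral.integral_add hint_ψ2r (hint_rest 0 s₀ hsub1)]
    apply intervalIntegral.integral_congr
    intro x _
    ring
  -- bound the rest integral
  have hsubA : Set.uIcc (0:ℝ) 1 ⊆ Set.Icc 0 s₀ := by
    rw [Set.uIcc_of_le h01]; exact Set.Icc_subset_Icc le_rfl (by linarith)
  have hsubB : Set.uIcc (1:ℝ) (s₀ - 1) ⊆ Set.Icc 0 s₀ := by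
    rw [Set.uIcc_of_le h1s]; exact Set.Icc_subset_Icc (by norm_num) (by linarith)
  have hsubC : Set.uIcc (s₀ - 1) s₀ ⊆ Set.Icc 0 s₀ := by
    rw [Set.uIcc_of_le hss]; exact Set.Icc_subset_Icc (by linarith) le_rfl
  have hrestA : (∫ s in (0:ℝ)..1, (1 - ψ s ^ 2) * r s) ≤ c := by
    have hcint : IntervalIntegrable (fun _ => c) volume 0 1 := intervalIntegrable_const
    have := intervalIntegral.integral_mono_on h01 (hint_rest 0 1 hsubA) hcint
      (fun x hx => by
        have := hbd_rest x (hsubA (by rwa [Set.uIcc_of_le h01]))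
        exact (abs_le.1 this).2)
    simpa using this
  have hrestB : (∫ s in (1:ℝ)..(s₀ - 1), (1 - ψ s ^ 2) * r s) = 0 := by
    have : (∫ s in (1:ℝ)..(s₀ - 1), (1 - ψ s ^ 2) * r s) =
        ∫ s in (1:ℝ)..(s₀ - 1), (0:ℝ) := by
      apply intervalIntegral.integral_congr
      intro x hx
      rw [Set.uIcc_of_le h1s] at hx
      show (1 - ψ x ^ 2) * r x = 0
      rw [hψ_mid x hx]
      ring
    rw [this, intervalIntegral.integral_zero]
  have hrestC : (∫ s in (s₀ - 1)..s₀, (1 - ψ s ^ 2) * r s) ≤ c := by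
    have hcint : IntervalIntegrable (fun _ => c) volume (s₀ - 1) s₀ := intervalIntegrable_const
    have := intervalIntegral.integral_mono_on hss (hint_rest (s₀-1) s₀ hsubC) hcint
      (fun x hx => by
        have := hbd_rest x (hsubC (by rwa [Set.uIcc_of_le hss]))
        exact (abs_le.1 this).2)
    simpa using this
  have hrest_split : (∫ s in (0:ℝ)..s₀, (1 - ψ s ^ 2) * r s) =
      (∫ s in (0:ℝ)..1, (1 - ψ s ^ 2) * r s) +
      (∫ s in (1:ℝ)..(s₀-1), (1 - ψ s ^ 2) * r s) +
      (∫ s in (s₀-1)..s₀, (1 - ψ s ^ 2) * r s) := by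
    rw [← intervalIntegral.integral_add_adjacent_intervals
        (b := (1:ℝ)) (hint_rest 0 1 hsubA) ((hint_rest 1 (s₀-1) hsubB).trans (hint_rest (s₀-1) s₀ hsubC)),
      ← intervalIntegral.integral_add_adjacent_intervals
        (b := (s₀-1)) (hint_rest 1 (s₀-1) hsubB) (hint_rest (s₀-1) s₀ hsubC)]
    ring
  have hrest : (∫ s in (0:ℝ)..s₀, (1 - ψ s ^ 2) * r s) ≤ 2 * c := by
    rw [hrest_split, hrestB]
    linarith
  rw [hsplit]
  have : (n:ℝ) - 1 = ((n:ℝ) - 1) := rfl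
  linarith [hsv', hrest]
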